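/- arXiv:1305.5054 — 2 statements merged into one kernel-verified Lean document; each statement's English description precedes it below -/
import Mathlib

section
/- Let W(s) = (1/4)(1 - s^2)^2, q(t) = tanh(t/√2), c₀ = 2√2/3, and fix σ ∈ (0,1). Then for every natural number k, ε^{-k} · | ∫_{-ε^{1-σ/2}}^{ε^{1-σ/2}} (1/ε) ( (1/2) q'(t/ε)^2 + W(q(t/ε)) ) dt − c₀ | → 0 as ε → 0⁺. In other words, the rescaled one-dimensional profile energy on the interval (-ε^{1-σ/2}, ε^{1-σ/2}) approximates c₀ to within an error that vanishes faster than any power of ε. -/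
open Filter Topology

/-- The double-well potential `W(s) = (1/4)(1-s²)²`. -/
noncomputable def W (s : ℝ) : ℝ := (1 / 4) * (1 - s ^ 2) ^ 2

/-- The optimal one-dimensional profile `q(t) = tanh(t/√2)`. -/
noncomputable def q (t : ℝ) : ℝ := Real.tanh (t / Real.sqrt 2)

lemma tanh_hasDerivAt (x : ℝ) : HasDerivAt Real.tanh (1 - Real.tanh x ^ 2) x := by
  have h : HasDerivAt (fun y => Real.sinh y / Real.cosh y)
      ((Real.cosh x * Real.cosh x - Real.sinh x * Real.sinh x) / Real.cosh x ^ 2) x :=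
    (Real.hasDerivAt_sinh x).div (Real.hasDerivAt_cosh x) (Real.cosh_pos x).ne'
  have : (Real.cosh x * Real.cosh x - Real.sinh x * Real.sinh x) / Real.cosh x ^ 2
      = 1 - Real.tanh x ^ 2 := by
    rw [Real.tanh_eq_sinh_div_cosh]
    have h2 : Real.cosh x ^ 2 = Real.sinh x ^ 2 + 1 := Real.cosh_sq x
    field_simp
  rw [this] at h
  exact h.congr_of_eventuallyEq (by filter_upwards with y using Real.tanh_eq_sinh_div_cosh y)

lemma continuous_tanh' : Continuous Real.tanh :=
  (Differentiable.continuous fun x => (tanh_hasDerivAt x).differentiableAt)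

lemma deriv_q (s : ℝ) : deriv q s = (1 - Real.tanh (s / Real.sqrt 2) ^ 2) / Real.sqrt 2 := by
  have h : HasDerivAt q ((1 - Real.tanh (s / Real.sqrt 2) ^ 2) * (1 / Real.sqrt 2)) s := by
    have h1 : HasDerivAt (fun t : ℝ => t / Real.sqrt 2) (1 / Real.sqrt 2) s := by
      simpa using (hasDerivAt_id s).div_const (Real.sqrt 2)
    exact (tanh_hasDerivAt (s / Real.sqrt 2)).comp s h1
  rw [h.deriv]; ring

lemma integrand_eq (ε : ℝ) (hε : 0 < ε) (t : ℝ) :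
    (1 / ε) * ((1 / 2) * (deriv q (t / ε)) ^ 2 + W (q (t / ε)))
      = (1 / (2 * ε)) * (1 - Real.tanh (t / (ε * Real.sqrt 2)) ^ 2) ^ 2 := by
  have hs2 : (Real.sqrt 2) ^ 2 = 2 := Real.sq_sqrt (by norm_num)
  have hsne : Real.sqrt 2 ≠ 0 := by positivity
  have harg : t / ε / Real.sqrt 2 = t / (ε * Real.sqrt 2) := by
    field_simp
  rw [deriv_q, q, W, harg]
  field_simp
  linear_combination (-2 + 4 * Real.tanh (t / (ε * Real.sqrt 2)) ^ 2 - 2 * Real.tanh (t / (ε * Real.sqrt 2)) ^ 4) * hs2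

lemma antideriv_hasDerivAt (ε : ℝ) (hε : 0 < ε) (t : ℝ) :
    HasDerivAt (fun t => (Real.sqrt 2 / 2) *
        (Real.tanh (t / (ε * Real.sqrt 2)) - Real.tanh (t / (ε * Real.sqrt 2)) ^ 3 / 3))
      ((1 / (2 * ε)) * (1 - Real.tanh (t / (ε * Real.sqrt 2)) ^ 2) ^ 2) t := by
  have hs2 : (Real.sqrt 2) ^ 2 = 2 := Real.sq_sqrt (by norm_num)
  have hsne : Real.sqrt 2 ≠ 0 := by positivity
  have h1 : HasDerivAt (fun t : ℝ => t / (ε * Real.sqrt 2)) (1 / (ε * Real.sqrt 2)) t := by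
    simpa using (hasDerivAt_id t).div_const (ε * Real.sqrt 2)
  set u := t / (ε * Real.sqrt 2)
  have h2 : HasDerivAt (fun t : ℝ => Real.tanh (t / (ε * Real.sqrt 2)))
      ((1 - Real.tanh u ^ 2) * (1 / (ε * Real.sqrt 2))) t :=
    by rw [show u = t / (ε * Real.sqrt 2) from rfl]; exact (tanh_hasDerivAt _).comp t h1
  have h3 := ((h2.sub ((h2.pow 3).div_const 3)).const_mul (Real.sqrt 2 / 2))
  refine h3.congr_deriv ?_
  rw [show u = t / (ε * Real.sqrt 2) from rfl]
  field_simp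
  ring

lemma integral_eval (ε a : ℝ) (hε : 0 < ε) :
    (∫ t in (-a)..a, (1 / ε) * ((1 / 2) * (deriv q (t / ε)) ^ 2 + W (q (t / ε))))
      = Real.sqrt 2 * (Real.tanh (a / (ε * Real.sqrt 2))
          - Real.tanh (a / (ε * Real.sqrt 2)) ^ 3 / 3) := by
  have hcont : Continuous (fun t : ℝ =>
      (1 / (2 * ε)) * (1 - Real.tanh (t / (ε * Real.sqrt 2)) ^ 2) ^ 2) :=
    continuous_const.mul ((continuous_const.sub
      ((continuous_tanh'.comp (continuous_id.div_const _)).pow 2)).pow 2)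
  have key : (∫ t in (-a)..a,
        (1 / (2 * ε)) * (1 - Real.tanh (t / (ε * Real.sqrt 2)) ^ 2) ^ 2)
      = (Real.sqrt 2 / 2) * (Real.tanh (a / (ε * Real.sqrt 2))
            - Real.tanh (a / (ε * Real.sqrt 2)) ^ 3 / 3)
        - (Real.sqrt 2 / 2) * (Real.tanh ((-a) / (ε * Real.sqrt 2))
            - Real.tanh ((-a) / (ε * Real.sqrt 2)) ^ 3 / 3) :=
    intervalIntegral.integral_eq_sub_of_hasDerivAt
      (fun t _ => antideriv_hasDerivAt ε hε t) (hcont.intervalIntegrable _ _)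
  rw [intervalIntegral.integral_congr (g := fun t =>
      (1 / (2 * ε)) * (1 - Real.tanh (t / (ε * Real.sqrt 2)) ^ 2) ^ 2)
      (fun t _ => integrand_eq ε hε t), key, neg_div, Real.tanh_neg]
  ring

lemma tanh_nonneg' {x : ℝ} (hx : 0 ≤ x) : 0 ≤ Real.tanh x := by
  rw [Real.tanh_eq_sinh_div_cosh]
  exact div_nonneg (by rwa [Real.sinh_nonneg_iff]) (Real.cosh_pos x).le

lemma tanh_lt_one' (x : ℝ) : Real.tanh x < 1 := by
  rw [Real.tanh_eq_sinh_div_cosh, div_lt_one (Real.cosh_pos x)]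
  nlinarith [Real.cosh_sub_sinh x, Real.exp_pos (-x)]

lemma one_sub_tanh_le {x : ℝ} (hx : 0 ≤ x) : 1 - Real.tanh x ≤ 2 * Real.exp (-(2 * x)) := by
  have hc : 0 < Real.cosh x := Real.cosh_pos x
  have h1 : 1 - Real.tanh x = Real.exp (-x) / Real.cosh x := by
    rw [Real.tanh_eq_sinh_div_cosh]
    field_simp [Real.cosh_sub_sinh x]
    exact Real.cosh_sub_sinh x
  have h2 : Real.exp x / 2 ≤ Real.cosh x := by
    rw [Real.cosh_eq]
    nlinarith [Real.exp_pos (-x)]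
  rw [h1]
  have hex : 0 < Real.exp x := Real.exp_pos x
  calc Real.exp (-x) / Real.cosh x ≤ Real.exp (-x) / (Real.exp x / 2) :=
        div_le_div_of_nonneg_left (Real.exp_pos _).le (by positivity) h2
    _ = 2 * Real.exp (-(2 * x)) := by
        rw [show -(2*x) = -x + -x by ring, Real.exp_add, Real.exp_neg]
        field_simp

lemma err_bound {L : ℝ} (hL : 0 ≤ L) :
    |Real.sqrt 2 * (Real.tanh L - Real.tanh L ^ 3 / 3) - 2 * Real.sqrt 2 / 3|
      ≤ 4 * Real.sqrt 2 * Real.exp (-(4 * L)) := by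
  set x := Real.tanh L
  have hx0 : 0 ≤ x := tanh_nonneg' hL
  have hx1 : x < 1 := tanh_lt_one' L
  have hs : 0 < Real.sqrt 2 := by positivity
  have h1 : Real.sqrt 2 * (x - x ^ 3 / 3) - 2 * Real.sqrt 2 / 3
      = -(Real.sqrt 2 * ((1 - x) ^ 2 * (x + 2) / 3)) := by ring
  rw [h1, abs_neg, abs_of_nonneg (by
    apply mul_nonneg hs.le
    apply div_nonneg (mul_nonneg (sq_nonneg _) (by linarith)) (by norm_num))]
  have h2 : (1 - x) ^ 2 * (x + 2) / 3 ≤ (1 - x) ^ 2 := by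
    nlinarith [sq_nonneg (1 - x)]
  have h3 : 1 - x ≤ 2 * Real.exp (-(2 * L)) := one_sub_tanh_le hL
  have hE : Real.exp (-(2 * L)) * Real.exp (-(2 * L)) = Real.exp (-(4 * L)) := by
    rw [← Real.exp_add]; ring_nf
  have h4 : (1 - x) ^ 2 ≤ 4 * Real.exp (-(4 * L)) := by
    nlinarith [Real.exp_pos (-(2 * L)), hx1]
  calc Real.sqrt 2 * ((1 - x) ^ 2 * (x + 2) / 3)
      ≤ Real.sqrt 2 * ((1 - x) ^ 2) := by nlinarith
    _ ≤ Real.sqrt 2 * (4 * Real.exp (-(4 * L))) := by nlinarith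
    _ = 4 * Real.sqrt 2 * Real.exp (-(4 * L)) := by ring

/-- The rescaled one-dimensional profile energy on `(-ε^{1-σ/2}, ε^{1-σ/2})` approximates
`c₀ = 2√2/3` to within an error vanishing faster than any power of `ε`. -/
theorem inner_energy_approx (σ : ℝ) (hσ : σ ∈ Set.Ioo (0 : ℝ) 1) (k : ℕ) :
    Tendsto (fun ε : ℝ =>
        ε ^ (-(k : ℝ)) *
          |(∫ t in (-(ε ^ (1 - σ / 2)))..(ε ^ (1 - σ / 2)),
              (1 / ε) * ((1 / 2) * (deriv q (t / ε)) ^ 2 + W (q (t / ε)))) -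
            2 * Real.sqrt 2 / 3|)
      (𝓝[>] (0 : ℝ)) (𝓝 (0 : ℝ)) := by
  obtain ⟨hσ0, hσ1⟩ := hσ
  have hσne : σ ≠ 0 := ne_of_gt hσ0
  have hs : (0:ℝ) < Real.sqrt 2 := by positivity
  have hsne : Real.sqrt 2 ≠ 0 := hs.ne'
  have hss : Real.sqrt 2 * Real.sqrt 2 = 2 := Real.mul_self_sqrt (by norm_num)
  set c : ℝ := 2 * (k : ℝ) / σ with hc
  set bd : ℝ → ℝ := fun ε => 4 * Real.sqrt 2 *
      ((ε ^ (-(σ / 2))) ^ c * Real.exp (-(2 * Real.sqrt 2) * ε ^ (-(σ / 2)))) with hbd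
  -- the bound tends to 0
  have T1 : Tendsto (fun ε : ℝ => ε ^ (-(σ / 2))) (𝓝[>] (0:ℝ)) atTop := by
    have h := (tendsto_rpow_atTop (by positivity : (0:ℝ) < σ / 2)).comp tendsto_inv_nhdsGT_zero
    apply h.congr'
    filter_upwards [self_mem_nhdsWithin] with ε (hε : ε ∈ Set.Ioi (0:ℝ))
    rw [Function.comp_apply, Real.inv_rpow (le_of_lt hε), ← Real.rpow_neg (le_of_lt hε)]
  have T2 : Tendsto (fun y : ℝ => y ^ c * Real.exp (-(2 * Real.sqrt 2) * y)) atTop (𝓝 0) :=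
    tendsto_rpow_mul_exp_neg_mul_atTop_nhds_zero c (2 * Real.sqrt 2) (by positivity)
  have Tb : Tendsto bd (𝓝[>] (0:ℝ)) (𝓝 0) := by
    have := (T2.comp T1).const_mul (4 * Real.sqrt 2)
    simpa [hbd, Function.comp] using this
  apply squeeze_zero' _ _ Tb
  · filter_upwards [self_mem_nhdsWithin] with ε (hε : ε ∈ Set.Ioi (0:ℝ))
    exact mul_nonneg (Real.rpow_nonneg (le_of_lt hε) _) (abs_nonneg _)
  · filter_upwards [self_mem_nhdsWithin] with ε (hε : ε ∈ Set.Ioi (0:ℝ))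
    have hε' : (0:ℝ) < ε := hε
    set y : ℝ := ε ^ (-(σ / 2)) with hy
    have hy0 : 0 < y := Real.rpow_pos_of_pos hε' _
    -- rewrite the integral
    have harg : ε ^ (1 - σ / 2) / (ε * Real.sqrt 2) = y / Real.sqrt 2 := by
      rw [show (1 - σ / 2) = -(σ / 2) + 1 by ring, Real.rpow_add hε', Real.rpow_one, hy]
      field_simp
    have hint := integral_eval ε (ε ^ (1 - σ / 2)) hε'
    rw [harg] at hint
    rw [hint]
    -- rewrite the power of ε
    have hpow : ε ^ (-(k : ℝ)) = y ^ c := by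
      rw [hy, ← Real.rpow_mul (le_of_lt hε')]
      congr 1
      rw [hc]
      field_simp
    rw [hpow]
    have hLnn : (0:ℝ) ≤ y / Real.sqrt 2 := by positivity
    have habs := err_bound hLnn
    have hexp : -(4 * (y / Real.sqrt 2)) = -(2 * Real.sqrt 2) * y := by
      field_simp
      linear_combination (2 : ℝ) * hss
    rw [hexp] at habs
    calc y ^ c * |Real.sqrt 2 * (Real.tanh (y / Real.sqrt 2)
            - Real.tanh (y / Real.sqrt 2) ^ 3 / 3) - 2 * Real.sqrt 2 / 3|
        ≤ y ^ c * (4 * Real.sqrt 2 * Real.exp (-(2 * Real.sqrt 2) * y)) :=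
          mul_le_mul_of_nonneg_left habs (Real.rpow_nonneg hy0.le _)
      _ = bd ε := by rw [hbd]; ring
end

section
/- Let n ∈ {2,3} and λ ∈ (0, 1/50). There exists a constant C > 0, depending only on n and λ, with the following property: for every ε ∈ (0,1), every twice continuously differentiable u : ℝⁿ → ℝ, and every continuously differentiable compactly supported η : ℝⁿ → [0,1] with |∇η| ≤ 1 everywhere, setting ν := −ε Δu + (1/ε) W'(u), one has ∫_{{|u| ≥ 1−λ}} (1/ε) W(u) η^2 dx ≤ 15 λ ∫_{{|u| ≤ 1−λ} ∩ supp η} ε |∇u|^2 dx + C ε ∫_{supp η} ( ν^2 + W'(u)^2 + 1 ) dx. -/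
open MeasureTheory

/-- Its derivative `W'(s) = s³ - s`. -/
noncomputable def W' (s : ℝ) : ℝ := s ^ 3 - s

/-- The Laplacian of `u : ℝⁿ → ℝ`, `Δu = Σᵢ ∂²u/∂xᵢ²`. -/
noncomputable def lap {n : ℕ} (u : EuclideanSpace ℝ (Fin n) → ℝ)
    (x : EuclideanSpace ℝ (Fin n)) : ℝ :=
  ∑ i : Fin n, fderiv ℝ (fun y => fderiv ℝ u y (EuclideanSpace.single i 1)) x
    (EuclideanSpace.single i 1)

/- ## Auxiliary one-dimensional test function
We use the test function `g(s) = W'(s) · (2m/D(s))` where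
`D(s) = (1-s²) + m + √(((1-s²)-m)² + m²)` is a smoothed version of `2·max(1-s², m)`,
and `m = λ(2-λ) = 1-(1-λ)²`. -/

noncomputable def Rfun (m s : ℝ) : ℝ := Real.sqrt ((1 - s^2 - m)^2 + m^2)
noncomputable def Dfun (m s : ℝ) : ℝ := 1 - s^2 + m + Rfun m s
noncomputable def gfun (m s : ℝ) : ℝ := (s^3 - s) * (2*m / Dfun m s)
noncomputable def gfun' (m s : ℝ) : ℝ :=
  (2*m / Dfun m s) *
    ((3*s^2 - 1) - 2*s^2*(1-s^2)*(1 + (1 - s^2 - m)/Rfun m s) / Dfun m s)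

section onedim
variable {m s : ℝ}

lemma R_pos (hm : 0 < m) : 0 < Rfun m s := Real.sqrt_pos.2 (by positivity)

lemma R_ge : |1 - s^2 - m| ≤ Rfun m s := by
  rw [← Real.sqrt_sq_eq_abs]
  exact Real.sqrt_le_sqrt (by nlinarith [sq_nonneg m])

lemma R_le (hm : 0 < m) : Rfun m s ≤ |1 - s^2 - m| + m := by
  have h1 : Rfun m s ≤ Real.sqrt ((|1 - s^2 - m| + m)^2) := by
    apply Real.sqrt_le_sqrt
    have := abs_nonneg (1 - s^2 - m)
    nlinarith [sq_abs (1 - s^2 - m)]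
  rwa [Real.sqrt_sq (by positivity)] at h1

lemma D_ge_2m (hm : 0 < m) : 2*m ≤ Dfun m s := by
  have h1 := R_ge (m := m) (s := s)
  have h2 : -(1 - s^2 - m) ≤ |1 - s^2 - m| := neg_le_abs _
  rw [Dfun]; linarith

lemma D_ge_2A (hm : 0 < m) : 2*(1 - s^2) ≤ Dfun m s := by
  have h1 := R_ge (m := m) (s := s)
  have h2 : (1 - s^2 - m) ≤ |1 - s^2 - m| := le_abs_self _
  rw [Dfun]; linarith

lemma D_pos (hm : 0 < m) : 0 < Dfun m s := lt_of_lt_of_le (by linarith) (D_ge_2m hm)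

lemma D_le_3m (hm : 0 < m) (hs : 1 - m ≤ s^2) : Dfun m s ≤ 3*m := by
  have h1 := R_le (m := m) (s := s) hm
  have h2 : |1 - s^2 - m| = -(1 - s^2 - m) := abs_of_nonpos (by nlinarith)
  rw [Dfun]; rw [h2] at h1; linarith

lemma h_le_one (hm : 0 < m) : 2*m / Dfun m s ≤ 1 :=
  (div_le_one (D_pos hm)).2 (D_ge_2m hm)

lemma h_pos (hm : 0 < m) : 0 < 2*m / Dfun m s := div_pos (by linarith) (D_pos hm)

lemma L1 (hm : 0 < m) : 0 ≤ W' s * gfun m s := by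
  rw [W', gfun]
  have := h_pos (m := m) (s := s) hm
  nlinarith [sq_nonneg (s^3 - s)]

lemma L3 (hm : 0 < m) : (gfun m s)^2 ≤ W' s * gfun m s := by
  rw [W', gfun]
  have h1 := h_pos (m := m) (s := s) hm
  have h2 := h_le_one (m := m) (s := s) hm
  nlinarith [sq_nonneg (s^3 - s), sq_nonneg ((s^3-s) * (2*m/Dfun m s))]

lemma L5b (hm : 0 < m) : (gfun m s)^2 ≤ (W' s)^2 := by
  rw [W', gfun]
  have h1 := h_pos (m := m) (s := s) hm
  have h2 := h_le_one (m := m) (s := s) hm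
  have key : ((s^3-s) * (2*m/Dfun m s))^2 = (s^3-s)^2 * (2*m/Dfun m s)^2 := by ring
  rw [key]
  have h3 : (2*m/Dfun m s)^2 ≤ 1 := by nlinarith
  nlinarith [mul_le_mul_of_nonneg_left h3 (sq_nonneg (s^3 - s))]

lemma L2 (hm : 0 < m) (hm' : m ≤ 1/25) (hs : 1 - m ≤ s^2) :
    W s ≤ (2/5) * (W' s * gfun m s) := by
  have hD3 := D_le_3m hm hs
  have hDp := D_pos (m := m) (s := s) hm
  have hh : 2/3 ≤ 2*m / Dfun m s := by
    rw [le_div_iff₀ hDp]; linarith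
  have hW'sq : (W' s)^2 = 4 * s^2 * W s := by rw [W', W]; ring
  have hWnn : 0 ≤ W s := by rw [W]; positivity
  have hs2 : (24:ℝ)/25 ≤ s^2 := by linarith
  have heq : W' s * gfun m s = (W' s)^2 * (2*m/Dfun m s) := by rw [W', gfun]; ring
  rw [heq, hW'sq]
  nlinarith [mul_le_mul_of_nonneg_left hh (by positivity : (0:ℝ) ≤ 4 * s^2 * W s)]

lemma L4b (hm : 0 < m) (hs : s^2 ≤ 1) : |gfun m s| ≤ m := by
  have hDp := D_pos (m := m) (s := s) hm
  have hD2A := D_ge_2A (m := m) (s := s) hm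
  have hA : 0 ≤ 1 - s^2 := by linarith
  have habs : |s| ≤ 1 := by
    have h1 : |s|^2 ≤ 1 := by rwa [sq_abs]
    nlinarith [abs_nonneg s]
  have h1 : |gfun m s| = |s^3 - s| * (2*m/Dfun m s) := by
    rw [gfun, abs_mul, abs_of_pos (h_pos (m := m) (s := s) hm)]
  have h2 : |s^3 - s| ≤ 1 - s^2 := by
    have : |s^3 - s| = |s| * (1 - s^2) := by
      rw [show s^3 - s = s * (s^2 - 1) by ring, abs_mul,
        abs_of_nonpos (by linarith : s^2 - 1 ≤ 0)]
      ring
    rw [this]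
    nlinarith [abs_nonneg s]
  have h3 : (1 - s^2) * (2*m/Dfun m s) ≤ m := by
    rw [mul_div_assoc', div_le_iff₀ hDp]
    nlinarith
  calc |gfun m s| = |s^3 - s| * (2*m/Dfun m s) := h1
    _ ≤ (1 - s^2) * (2*m/Dfun m s) :=
        mul_le_mul_of_nonneg_right h2 (le_of_lt (h_pos hm))
    _ ≤ m := h3

lemma tau_nonneg (hm : 0 < m) : 0 ≤ 1 + (1 - s^2 - m)/Rfun m s := by
  have hR := R_pos (m := m) (s := s) hm
  have h1 : -(1:ℝ) ≤ (1 - s^2 - m)/Rfun m s := by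
    rw [le_div_iff₀ hR]
    have := neg_le_abs (1 - s^2 - m)
    have := R_ge (m := m) (s := s)
    linarith
  linarith

lemma tau_le_two (hm : 0 < m) : 1 + (1 - s^2 - m)/Rfun m s ≤ 2 := by
  have hR := R_pos (m := m) (s := s) hm
  have h1 : (1 - s^2 - m)/Rfun m s ≤ 1 := by
    rw [div_le_one hR]
    exact le_trans (le_abs_self _) R_ge
  linarith

lemma L4a (hm : 0 < m) (hs : s^2 ≤ 1) : -m ≤ gfun' m s := by
  have hD := D_pos (m := m) (s := s) hm
  have hA : 0 ≤ 1 - s^2 := by linarith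
  have hτ2 := tau_le_two (m := m) (s := s) hm
  have hτ0 := tau_nonneg (m := m) (s := s) hm
  have hD2A := D_ge_2A (m := m) (s := s) hm
  set τ := 1 + (1 - s^2 - m)/Rfun m s with hτdef
  have hterm : 2*s^2*(1-s^2)*τ / Dfun m s ≤ 2*s^2 := by
    rw [div_le_iff₀ hD]
    have h1 : (1-s^2)*τ ≤ Dfun m s := by nlinarith
    nlinarith [sq_nonneg s]
  have hB : -(1 - s^2) ≤ (3*s^2 - 1) - 2*s^2*(1-s^2)*τ / Dfun m s := by linarith
  have hgp := h_pos (m := m) (s := s) hm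
  have step := mul_le_mul_of_nonneg_left hB (le_of_lt hgp)
  rw [gfun']
  have hfin : (2*m/Dfun m s) * (-(1 - s^2)) ≥ -m := by
    have h2 : (2*m/Dfun m s) * (1 - s^2) ≤ m := by
      rw [div_mul_eq_mul_div, div_le_iff₀ hD]; nlinarith
    linarith [h2]
  calc -m ≤ (2*m/Dfun m s) * (-(1 - s^2)) := hfin
    _ ≤ _ := step

lemma L5a (hm : 0 < m) (hm' : m ≤ 1/25) (hs : 1 - m ≤ s^2) : 1/2 ≤ gfun' m s := by
  have hD := D_pos (m := m) (s := s) hm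
  have hD3 := D_le_3m hm hs
  have hτ2 := tau_le_two (m := m) (s := s) hm
  have hτ0 := tau_nonneg (m := m) (s := s) hm
  have hR := R_pos (m := m) (s := s) hm
  have h23 : 2/3 ≤ 2*m/Dfun m s := by
    rw [le_div_iff₀ hD]; linarith
  have hh1 := h_le_one (m := m) (s := s) hm
  set τ := 1 + (1 - s^2 - m)/Rfun m s with hτdef
  rcases le_or_gt (s^2) 1 with hs1 | hs1
  · have hA : 1 - s^2 ≤ m := by linarith
    have hA0 : 0 ≤ 1 - s^2 := by linarith
    have hτ1 : τ ≤ 1 := by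
      rw [hτdef]
      have : (1 - s^2 - m)/Rfun m s ≤ 0 := by
        rw [div_eq_mul_inv]
        exact mul_nonpos_of_nonpos_of_nonneg (by linarith) (inv_nonneg.2 (le_of_lt hR))
      linarith
    have hterm : 2*s^2*(1-s^2)*τ / Dfun m s ≤ 1 := by
      rw [div_le_iff₀ hD]
      have hD2m := D_ge_2m (m := m) (s := s) hm
      have e1 : s^2*(1-s^2) ≤ m := by nlinarith
      have e2 : (s^2*(1-s^2))*τ ≤ m*1 :=
        mul_le_mul e1 hτ1 hτ0 (le_of_lt hm)
      nlinarith
    have hB : 1 - 3*m ≤ (3*s^2 - 1) - 2*s^2*(1-s^2)*τ / Dfun m s := by nlinarith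
    rw [gfun']
    nlinarith
  · have hterm : 2*s^2*(1-s^2)*τ / Dfun m s ≤ 0 := by
      rw [div_eq_mul_inv]
      refine mul_nonpos_of_nonpos_of_nonneg ?_ (inv_nonneg.2 (le_of_lt hD))
      have hx : 0 ≤ 2*s^2*(s^2-1)*τ :=
        mul_nonneg (mul_nonneg (by positivity) (by linarith)) hτ0
      nlinarith
    have hB : 2 ≤ (3*s^2 - 1) - 2*s^2*(1-s^2)*τ / Dfun m s := by nlinarith
    rw [gfun']
    nlinarith

lemma Q_pos (hm : 0 < m) : (0:ℝ) < (1 - s^2 - m)^2 + m^2 := by positivity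

lemma hasDerivAt_gfun (hm : 0 < m) : HasDerivAt (gfun m) (gfun' m s) s := by
  have hQ0 := Q_pos (m := m) (s := s) hm
  have hR := R_pos (m := m) (s := s) hm
  have hD := D_pos (m := m) (s := s) hm
  have h0 : HasDerivAt (fun t : ℝ => 1 - t^2 - m) (-(2*s)) s := by
    have := ((hasDerivAt_pow 2 s).const_sub 1).sub_const m
    simpa using this
  have hQ : HasDerivAt (fun t : ℝ => (1 - t^2 - m)^2 + m^2)
      (2*(1 - s^2 - m)*(-(2*s))) s := by
    have := (h0.pow 2).add_const (m^2)
    simpa [mul_comm, mul_assoc, mul_left_comm] using this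
  have hRd : HasDerivAt (fun t : ℝ => Rfun m t)
      (1/(2*Rfun m s) * (2*(1 - s^2 - m)*(-(2*s)))) s := by
    have hsq := Real.hasDerivAt_sqrt (ne_of_gt hQ0)
    exact (HasDerivAt.comp s hsq hQ)
  have hDd : HasDerivAt (Dfun m)
      (-(2*s) + 1/(2*Rfun m s) * (2*(1 - s^2 - m)*(-(2*s)))) s := by
    have h1 := (((hasDerivAt_pow 2 s).const_sub 1).add_const m).add hRd
    unfold Dfun
    refine h1.congr_deriv ?_
    push_cast
    ring
  have hN : HasDerivAt (fun t : ℝ => t^3 - t) (3*s^2 - 1) s := by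
    have := (hasDerivAt_pow 3 s).sub (hasDerivAt_id' s)
    simp at this
    exact this
  have hquot : HasDerivAt (fun t => 2*m / Dfun m t)
      ((0 * Dfun m s - 2*m*(-(2*s) + 1/(2*Rfun m s) * (2*(1 - s^2 - m)*(-(2*s)))))
        / (Dfun m s)^2) s :=
    (hasDerivAt_const s (2*m)).div hDd (ne_of_gt hD)
  have := hN.mul hquot
  refine this.congr_deriv ?_
  rw [gfun']
  field_simp
  ring

lemma continuous_Rfun (hm : 0 < m) : Continuous (Rfun m) := by
  unfold Rfun
  exact Real.continuous_sqrt.comp (by continuity)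

lemma continuous_Dfun (hm : 0 < m) : Continuous (Dfun m) := by
  unfold Dfun
  exact (by continuity : Continuous fun s : ℝ => 1 - s^2 + m).add (continuous_Rfun hm)

lemma continuous_gfun (hm : 0 < m) : Continuous (gfun m) := by
  unfold gfun
  exact (by continuity : Continuous fun s : ℝ => s^3 - s).mul
    (continuous_const.div (continuous_Dfun hm) (fun s => ne_of_gt (D_pos hm)))

lemma continuous_gfun' (hm : 0 < m) : Continuous (gfun' m) := by
  unfold gfun'
  have c1 : Continuous fun s : ℝ => 2*m/Dfun m s :=
    continuous_const.div (continuous_Dfun hm) (fun s => ne_of_gt (D_pos hm))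
  have c2 : Continuous fun s : ℝ => (1 - s^2 - m)/Rfun m s :=
    (by continuity : Continuous fun s : ℝ => 1 - s^2 - m).div (continuous_Rfun hm)
      (fun s => ne_of_gt (R_pos hm))
  have c3 : Continuous fun s : ℝ => 2*s^2*(1-s^2)*(1 + (1 - s^2 - m)/Rfun m s) :=
    (by continuity : Continuous fun s : ℝ => 2*s^2*(1-s^2)).mul (continuous_const.add c2)
  exact c1.mul ((by continuity : Continuous fun s : ℝ => 3*s^2 - 1).sub
    (c3.div (continuous_Dfun hm) (fun s => ne_of_gt (D_pos hm))))

end onedim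

section bridges
variable {n : ℕ}

lemma fderiv_eq_inner_gradient (f : EuclideanSpace ℝ (Fin n) → ℝ)
    (x v : EuclideanSpace ℝ (Fin n)) :
    fderiv ℝ f x v = inner ℝ (gradient f x) v := by
  rw [gradient, InnerProductSpace.toDual_symm_apply]

lemma sum_fderiv_mul (f g : EuclideanSpace ℝ (Fin n) → ℝ) (x : EuclideanSpace ℝ (Fin n)) :
    ∑ i : Fin n, fderiv ℝ f x (EuclideanSpace.single i 1) *
        fderiv ℝ g x (EuclideanSpace.single i 1)
      = inner ℝ (gradient f x) (gradient g x) := by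
  simp_rw [fderiv_eq_inner_gradient]
  rw [PiLp.inner_apply]
  congr 1
  ext i
  rw [EuclideanSpace.inner_single_right, EuclideanSpace.inner_single_right]
  simp [RCLike.inner_apply, mul_comm]

lemma gradient_eq_zero_of_nmem_tsupport {η : EuclideanSpace ℝ (Fin n) → ℝ}
    {x : EuclideanSpace ℝ (Fin n)} (hx : x ∉ tsupport η) : gradient η x = 0 := by
  rw [gradient]
  have h0 : fderiv ℝ η x = 0 := by
    by_contra h
    exact hx (support_fderiv_subset ℝ (Function.mem_support.2 h))
  rw [h0, map_zero]

lemma continuous_gradient {f : EuclideanSpace ℝ (Fin n) → ℝ} (hf : ContDiff ℝ 1 f) :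
    Continuous (fun x => gradient f x) := by
  have : (fun x => gradient f x)
      = fun x => (InnerProductSpace.toDual ℝ (EuclideanSpace ℝ (Fin n))).symm (fderiv ℝ f x) :=
    funext fun x => by rw [gradient]
  rw [this]
  exact (InnerProductSpace.toDual ℝ _).symm.continuous.comp (hf.continuous_fderiv one_ne_zero)

end bridges

set_option maxHeartbeats 2000000 in
/-- Quantitative control of the potential energy on `{|u| ≥ 1−λ}` by a small multiple of
the Dirichlet energy on the transition set `{|u| ≤ 1−λ}` plus terms of order `ε`,
where `ν = −εΔu + (1/ε)W'(u)` is the diffuse first variation. -/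
theorem small_deviations (n : ℕ) (hn : n = 2 ∨ n = 3)
    (lam : ℝ) (hlam : lam ∈ Set.Ioo (0 : ℝ) (1 / 50)) :
    ∃ C : ℝ, 0 < C ∧
      ∀ ε : ℝ, ε ∈ Set.Ioo (0 : ℝ) 1 →
      ∀ u : EuclideanSpace ℝ (Fin n) → ℝ, ContDiff ℝ 2 u →
      ∀ η : EuclideanSpace ℝ (Fin n) → ℝ, ContDiff ℝ 1 η → HasCompactSupport η →
        (∀ x, η x ∈ Set.Icc (0 : ℝ) 1) → (∀ x, ‖gradient η x‖ ≤ 1) →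
        (∫ x in {x | 1 - lam ≤ |u x|}, (1 / ε) * W (u x) * η x ^ 2) ≤
          15 * lam * (∫ x in {x | |u x| ≤ 1 - lam} ∩ tsupport η, ε * ‖gradient u x‖ ^ 2) +
            C * ε * ∫ x in tsupport η,
              ((-(ε * lap u x) + (1 / ε) * W' (u x)) ^ 2 + W' (u x) ^ 2 + 1) := by
  obtain ⟨hlam0, hlam1⟩ := hlam
  refine ⟨4, by norm_num, ?_⟩
  intro ε hε u hu η hη hηc hη01 hηg1
  obtain ⟨hε0, hε1⟩ := hε
  -- the parameter m = λ(2-λ), so that (1-λ)² = 1 - m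
  set m : ℝ := lam * (2 - lam) with hmdef
  have hm : 0 < m := by nlinarith
  have hm' : m ≤ 1/25 := by nlinarith
  have hm2l : m ≤ 2 * lam := by nlinarith
  have h1m : (1 - lam)^2 = 1 - m := by ring
  -- support set
  set S : Set (EuclideanSpace ℝ (Fin n)) := tsupport η with hSdef
  have hScompact : IsCompact S := hηc
  have hSmeas : MeasurableSet S := hScompact.isClosed.measurableSet
  -- abbreviations
  set Gu : EuclideanSpace ℝ (Fin n) → ℝ := fun x => gfun m (u x) with hGudef
  set G'u : EuclideanSpace ℝ (Fin n) → ℝ := fun x => gfun' m (u x) with hG'udef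
  set P : EuclideanSpace ℝ (Fin n) → ℝ := fun x => Gu x * η x ^ 2 with hPdef
  set nu : EuclideanSpace ℝ (Fin n) → ℝ :=
    fun x => -(ε * lap u x) + (1 / ε) * W' (u x) with hnudef
  set WG : EuclideanSpace ℝ (Fin n) → ℝ := fun x => W' (u x) * Gu x * η x ^ 2 with hWGdef
  -- differentiability / continuity toolkit
  have hu1 : Differentiable ℝ u := hu.differentiable (by norm_num)
  have hucont : Continuous u := hu1.continuous
  have hη1 : Differentiable ℝ η := hη.differentiable one_ne_zero
  have hηcont : Continuous η := hη1.continuous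
  have hfdu : Continuous (fun x => fderiv ℝ u x) := hu.continuous_fderiv (by norm_num)
  have hfdη : Continuous (fun x => fderiv ℝ η x) := hη.continuous_fderiv one_ne_zero
  have hgradu : Continuous (fun x => gradient u x) :=
    continuous_gradient (hu.of_le (by norm_num))
  have hgradη : Continuous (fun x => gradient η x) := continuous_gradient hη
  have hGcont : Continuous Gu := (continuous_gfun hm).comp hucont
  have hG'cont : Continuous G'u := (continuous_gfun' hm).comp hucont
  have hW'cont : Continuous (fun x => W' (u x)) := by
    have : Continuous W' := by unfold W'; continuity
    exact this.comp hucont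
  have hWcont : Continuous (fun x => W (u x)) := by
    have : Continuous W := by unfold W; continuity
    exact this.comp hucont
  -- second derivatives
  have hdiu : ∀ i : Fin n, ContDiff ℝ 1 (fun y => fderiv ℝ u y (EuclideanSpace.single i 1)) := by
    intro i
    have h1 : ContDiff ℝ 1 (fderiv ℝ u) := hu.fderiv_right (by norm_num)
    exact (ContinuousLinearMap.apply ℝ ℝ (EuclideanSpace.single i 1)).contDiff.comp h1
  have hd2cont : ∀ i : Fin n, Continuous
      (fun x => fderiv ℝ (fun y => fderiv ℝ u y (EuclideanSpace.single i 1)) x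
        (EuclideanSpace.single i 1)) := by
    intro i
    exact (ContinuousLinearMap.apply ℝ ℝ (EuclideanSpace.single i 1)).continuous.comp
      ((hdiu i).continuous_fderiv one_ne_zero)
  have hlapcont : Continuous (lap u) := by
    unfold lap
    exact continuous_finset_sum _ (fun i _ => hd2cont i)
  have hnucont : Continuous nu := by
    rw [hnudef]
    exact ((continuous_const.mul hlapcont).neg).add (continuous_const.mul hW'cont)
  -- vanishing off S
  have hηS : ∀ x, x ∉ S → η x = 0 := fun x hx => image_eq_zero_of_notMem_tsupport hx
  have hgradηS : ∀ x, x ∉ S → gradient η x = 0 :=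
    fun x hx => gradient_eq_zero_of_nmem_tsupport hx
  have hfdηS : ∀ x, x ∉ S → fderiv ℝ η x = 0 := by
    intro x hx
    by_contra h
    exact hx (support_fderiv_subset ℝ (Function.mem_support.2 h))
  -- integrability helper
  have mk_int : ∀ f : EuclideanSpace ℝ (Fin n) → ℝ, Continuous f →
      (∀ x, x ∉ S → f x = 0) → Integrable f := by
    intro f hf h0
    exact hf.integrable_of_hasCompactSupport (HasCompactSupport.intro hScompact h0)
  -- derivative of the test function P = g(u)·η²
  have hPfd : ∀ x, HasFDerivAt P
      ((Gu x) • ((η x) • fderiv ℝ η x + (η x) • fderiv ℝ η x)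
        + (η x ^ 2) • (G'u x • fderiv ℝ u x)) x := by
    intro x
    have h2 : HasFDerivAt (fun y => gfun m (u y)) (gfun' m (u x) • fderiv ℝ u x) x :=
      (hasDerivAt_gfun hm).comp_hasFDerivAt x (hu1 x).hasFDerivAt
    have h3 : HasFDerivAt (fun y => η y ^ 2) ((η x) • fderiv ℝ η x + (η x) • fderiv ℝ η x) x := by
      have h5 := ((hη1 x).hasFDerivAt).mul ((hη1 x).hasFDerivAt)
      have h4 : (fun y => η y ^ 2) = fun y => η y * η y := by ext y; ring
      rw [h4]
      exact h5
    exact h2.mul h3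
  have hPdiff : Differentiable ℝ P := fun x => (hPfd x).differentiableAt
  have hP_apply : ∀ x v, fderiv ℝ P x v
      = η x ^ 2 * G'u x * fderiv ℝ u x v + 2 * η x * Gu x * fderiv ℝ η x v := by
    intro x v
    rw [(hPfd x).fderiv]
    simp [ContinuousLinearMap.add_apply, ContinuousLinearMap.smul_apply, smul_eq_mul]
    ring
  have hPcont : Continuous P := hGcont.mul (hηcont.pow 2)
  have hPS : ∀ x, x ∉ S → P x = 0 := by
    intro x hx; rw [hPdef]; simp [hηS x hx]
  have hfdPcont : ∀ v, Continuous (fun x => fderiv ℝ P x v) := by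
    intro v
    have : (fun x => fderiv ℝ P x v)
        = fun x => η x ^ 2 * G'u x * fderiv ℝ u x v + 2 * η x * Gu x * fderiv ℝ η x v :=
      funext fun x => hP_apply x v
    rw [this]
    have c1 : Continuous fun x => fderiv ℝ u x v :=
      (ContinuousLinearMap.apply ℝ ℝ v).continuous.comp hfdu
    have c2 : Continuous fun x => fderiv ℝ η x v :=
      (ContinuousLinearMap.apply ℝ ℝ v).continuous.comp hfdη
    exact (((hηcont.pow 2).mul hG'cont).mul c1).add
      (((continuous_const.mul hηcont).mul hGcont).mul c2)
  have hfdPS : ∀ x, x ∉ S → ∀ v, fderiv ℝ P x v = 0 := by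
    intro x hx v
    rw [hP_apply x v, hηS x hx, hfdηS x hx]
    simp
  -- integration by parts, coordinatewise
  have ibp_i : ∀ i : Fin n,
      (∫ x, P x * fderiv ℝ (fun y => fderiv ℝ u y (EuclideanSpace.single i 1)) x
        (EuclideanSpace.single i 1))
      = - ∫ x, fderiv ℝ P x (EuclideanSpace.single i 1) *
          fderiv ℝ u x (EuclideanSpace.single i 1) := by
    intro i
    set v := EuclideanSpace.single (𝕜 := ℝ) i (1:ℝ) with hvdef
    have hdiucont : Continuous (fun y => fderiv ℝ u y v) :=
      (ContinuousLinearMap.apply ℝ ℝ v).continuous.comp hfdu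
    refine integral_mul_fderiv_eq_neg_fderiv_mul_of_integrable ?_ ?_ ?_ (fun x _ => hPdiff x)
      (fun x _ => (hdiu i).differentiable one_ne_zero x)
    · exact mk_int _ ((hfdPcont v).mul hdiucont)
        (fun x hx => by rw [hfdPS x hx v, zero_mul])
    · exact mk_int _ (hPcont.mul (hd2cont i))
        (fun x hx => by rw [hPS x hx, zero_mul])
    · exact mk_int _ (hPcont.mul hdiucont)
        (fun x hx => by rw [hPS x hx, zero_mul])
  -- the Dirichlet-form integrand
  set Q1 : EuclideanSpace ℝ (Fin n) → ℝ :=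
    fun x => η x ^ 2 * G'u x * ‖gradient u x‖ ^ 2
      + 2 * η x * Gu x * (inner ℝ (gradient u x) (gradient η x) : ℝ) with hQ1def
  have hQ1cont : Continuous Q1 := by
    rw [hQ1def]
    exact (((hηcont.pow 2).mul hG'cont).mul ((hgradu.norm).pow 2)).add
      (((continuous_const.mul hηcont).mul hGcont).mul (hgradu.inner hgradη))
  have hQ1S : ∀ x, x ∉ S → Q1 x = 0 := by
    intro x hx
    rw [hQ1def]
    simp [hηS x hx]
  have hQ1int : Integrable Q1 := mk_int _ hQ1cont hQ1S
  -- key identity: ∫ P·lap u = −∫ Q1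
  have hlap_ibp : (∫ x, P x * lap u x) = - ∫ x, Q1 x := by
    have e1 : (fun x => P x * lap u x)
        = fun x => ∑ i : Fin n, P x *
            fderiv ℝ (fun y => fderiv ℝ u y (EuclideanSpace.single i 1)) x
              (EuclideanSpace.single i 1) := by
      funext x
      rw [lap, Finset.mul_sum]
    rw [e1, integral_finset_sum]
    · have e2 : ∀ i ∈ Finset.univ, (∫ x, P x *
          fderiv ℝ (fun y => fderiv ℝ u y (EuclideanSpace.single i 1)) x
            (EuclideanSpace.single i 1))
          = - ∫ x, fderiv ℝ P x (EuclideanSpace.single i 1) *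
              fderiv ℝ u x (EuclideanSpace.single i 1) := fun i _ => ibp_i i
      rw [Finset.sum_congr rfl e2]
      rw [Finset.sum_neg_distrib, ← integral_finset_sum]
      · refine congrArg Neg.neg (integral_congr_ae (Filter.Eventually.of_forall fun x => ?_))
        have e3 : ∀ i : Fin n, fderiv ℝ P x (EuclideanSpace.single i 1) *
            fderiv ℝ u x (EuclideanSpace.single i 1)
            = η x ^ 2 * G'u x * (fderiv ℝ u x (EuclideanSpace.single i 1) *
                fderiv ℝ u x (EuclideanSpace.single i 1))
              + 2 * η x * Gu x * (fderiv ℝ η x (EuclideanSpace.single i 1) *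
                fderiv ℝ u x (EuclideanSpace.single i 1)) := by
          intro i
          rw [hP_apply]
          ring
        refine Eq.trans (Finset.sum_congr rfl (fun i _ => e3 i)) ?_
        rw [Finset.sum_add_distrib, ← Finset.mul_sum, ← Finset.mul_sum]
        have e4 : ∑ i : Fin n, fderiv ℝ u x (EuclideanSpace.single i 1) *
            fderiv ℝ u x (EuclideanSpace.single i 1)
            = ‖gradient u x‖ ^ 2 := by
          rw [sum_fderiv_mul u u x]
          exact real_inner_self_eq_norm_sq _
        have e5 : ∑ i : Fin n, fderiv ℝ η x (EuclideanSpace.single i 1) *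
            fderiv ℝ u x (EuclideanSpace.single i 1)
            = (inner ℝ (gradient u x) (gradient η x) : ℝ) := by
          rw [sum_fderiv_mul η u x]
          exact real_inner_comm _ _
        rw [e4, e5]
      · intro i _
        set v := EuclideanSpace.single (𝕜 := ℝ) i (1:ℝ) with hvdef
        have hdiucont : Continuous (fun y => fderiv ℝ u y v) :=
          (ContinuousLinearMap.apply ℝ ℝ v).continuous.comp hfdu
        exact mk_int _ ((hfdPcont v).mul hdiucont)
          (fun x hx => by rw [hfdPS x hx v, zero_mul])
    · intro i _
      exact mk_int _ (hPcont.mul (hd2cont i))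
        (fun x hx => by rw [hPS x hx, zero_mul])
  -- more integrability facts
  have hWGcont : Continuous WG := (hW'cont.mul hGcont).mul (hηcont.pow 2)
  have hWGS : ∀ x, x ∉ S → WG x = 0 := by
    intro x hx; rw [hWGdef]; simp [hηS x hx]
  have hWGint : Integrable WG := mk_int _ hWGcont hWGS
  have hWGnn : ∀ x, 0 ≤ WG x := by
    intro x
    rw [hWGdef]
    simp only
    have := L1 (m := m) (s := u x) hm
    positivity
  have hnuPint : Integrable (fun x => nu x * P x) :=
    mk_int _ (hnucont.mul hPcont) (fun x hx => by rw [hPS x hx, mul_zero])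
  have hIνint : IntegrableOn (fun x => nu x ^ 2) S :=
    ContinuousOn.integrableOn_compact hScompact (hnucont.pow 2).continuousOn
  have hPlapint : Integrable (fun x => P x * lap u x) :=
    mk_int _ (hPcont.mul hlapcont) (fun x hx => by rw [hPS x hx, zero_mul])
  -- the set TS
  set TS : Set (EuclideanSpace ℝ (Fin n)) := {x | |u x| ≤ 1 - lam} ∩ S with hTSdef
  have hTSclosed : IsClosed TS :=
    (isClosed_le hucont.abs continuous_const).inter hScompact.isClosed
  have hTSmeas : MeasurableSet TS := hTSclosed.measurableSet
  have hTScompact : IsCompact TS := hScompact.inter_left (isClosed_le hucont.abs continuous_const)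
  -- the main scalar quantities
  set Iν : ℝ := ∫ x in S, nu x ^ 2 with hIνdef
  set Dir : ℝ := ∫ x in TS, ‖gradient u x‖ ^ 2 with hDirdef
  set E2 : ℝ := ∫ x in S, (4*lam + 2*W' (u x)^2) with hE2def
  set J : ℝ := ∫ x, WG x with hJdef
  -- rewriting ∫ nu·P
  have ibp2 : (∫ x, nu x * P x) = ε * (∫ x, Q1 x) + (1/ε) * J := by
    have e1 : (fun x => nu x * P x)
        = fun x => -ε * (P x * lap u x) + (1/ε) * WG x := by
      funext x
      simp only [hnudef, hPdef, hWGdef]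
      ring
    rw [e1, integral_add (hPlapint.const_mul (-ε)) (hWGint.const_mul (1/ε)),
      integral_const_mul, integral_const_mul, hlap_ibp, hJdef]
    ring
  -- Young's inequality bound on ∫ nu·P
  have bd1 : (∫ x, nu x * P x) ≤ ε/2 * Iν + 1/(2*ε) * J := by
    have hmaj : ∀ x, nu x * P x
        ≤ S.indicator (fun x => ε/2 * nu x ^ 2) x + 1/(2*ε) * WG x := by
      intro x
      by_cases hx : x ∈ S
      · rw [Set.indicator_of_mem hx]
        have h2ε : (0:ℝ) < 2*ε := by linarith
        have hyoung : nu x * P x ≤ ε/2 * nu x^2 + 1/(2*ε) * (P x)^2 := by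
          have hinv : 2*ε*(1/(2*ε)) = 1 := by field_simp
          have h1 : 0 ≤ (ε * nu x - P x)^2 := sq_nonneg _
          have key2 : 2*ε*(nu x * P x) ≤ ε^2*nu x^2 + (P x)^2 := by nlinarith
          have key : 2*ε*(nu x * P x) ≤ 2*ε*(ε/2 * nu x^2 + 1/(2*ε)*(P x)^2) := by
            have e : 2*ε*(ε/2 * nu x^2 + 1/(2*ε)*(P x)^2)
                = ε^2*nu x^2 + (2*ε*(1/(2*ε)))*(P x)^2 := by ring
            rw [e, hinv, one_mul]
            exact key2
          exact le_of_mul_le_mul_left key h2ε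
        have hP2 : (P x)^2 ≤ WG x := by
          simp only [hPdef, hWGdef, hGudef, W']
          have e1 := L3 (m := m) (s := u x) hm
          have e2 := L1 (m := m) (s := u x) hm
          obtain ⟨ha, hb⟩ := hη01 x
          rw [W'] at e1 e2
          have ht0 : (0:ℝ) ≤ η x ^2 := sq_nonneg _
          have ht1 : η x^2 ≤ 1 := by nlinarith
          have hkey : 0 ≤ (gfun m (u x))^2 * (η x^2) * (1 - η x^2) :=
            mul_nonneg (mul_nonneg (sq_nonneg _) ht0) (by linarith)
          nlinarith [mul_le_mul_of_nonneg_right e1 ht0]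
        have hc2 : (0:ℝ) ≤ 1/(2*ε) := le_of_lt (div_pos one_pos (by linarith))
        have : 1/(2*ε) * (P x)^2 ≤ 1/(2*ε) * WG x :=
          mul_le_mul_of_nonneg_left hP2 hc2
        linarith
      · rw [Set.indicator_of_notMem hx]
        rw [hPS x hx, hWGS x hx]
        simp
    have hrhs_int : Integrable
        (fun x => S.indicator (fun x => ε/2 * nu x ^ 2) x + 1/(2*ε) * WG x) :=
      (IntegrableOn.integrable_indicator (hIνint.const_mul (ε/2)) hSmeas).add (hWGint.const_mul (1/(2*ε)))
    calc (∫ x, nu x * P x)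
        ≤ ∫ x, (S.indicator (fun x => ε/2 * nu x ^ 2) x + 1/(2*ε) * WG x) :=
          integral_mono hnuPint hrhs_int hmaj
      _ = ε/2 * Iν + 1/(2*ε) * J := by
          rw [integral_add (IntegrableOn.integrable_indicator (hIνint.const_mul (ε/2)) hSmeas)
            (hWGint.const_mul (1/(2*ε))), integral_indicator hSmeas,
            integral_const_mul, integral_const_mul, hIνdef, hJdef]
  -- the region bound on -∫ Q1
  have bd2 : (∫ x, -(Q1 x)) ≤ 3*lam*Dir + E2 := by
    have hptw : ∀ x, -(Q1 x)
        ≤ TS.indicator (fun x => 3*lam*‖gradient u x‖^2) x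
          + S.indicator (fun x => 4*lam + 2*W' (u x)^2) x := by
      intro x
      by_cases hx : x ∈ S
      · set Z : ℝ := ‖gradient u x‖ with hZdef
        have hZ0 : 0 ≤ Z := norm_nonneg _
        set c : ℝ := (inner ℝ (gradient u x) (gradient η x) : ℝ) with hcdef
        obtain ⟨hηa, hηb⟩ := hη01 x
        have hgg : |c| ≤ Z := by
          rw [hcdef]
          calc |(inner ℝ (gradient u x) (gradient η x) : ℝ)|
              ≤ ‖gradient u x‖ * ‖gradient η x‖ := abs_real_inner_le_norm _ _
            _ ≤ ‖gradient u x‖ * 1 :=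
                mul_le_mul_of_nonneg_left (hηg1 x) (norm_nonneg _)
            _ = Z := by rw [mul_one, hZdef]
        have hdecomp : -(Q1 x) = -(η x^2 * G'u x * Z^2) + -(2*η x*(Gu x*c)) := by
          simp only [hQ1def, hZdef, hcdef]
          ring
        rcases le_total (|u x|) (1 - lam) with hc | hc
        · -- transition region
          have hs1m : (u x)^2 ≤ 1 - m := by
            rw [← h1m, ← sq_abs]
            exact pow_le_pow_left₀ (abs_nonneg _) hc 2
          have hs1 : (u x)^2 ≤ 1 := by nlinarith
          have e4a := L4a (m := m) (s := u x) hm hs1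
          have e4b := L4b (m := m) (s := u x) hm hs1
          have hGuc : |Gu x * c| ≤ m * Z := by
            rw [abs_mul]
            exact mul_le_mul e4b hgg (abs_nonneg _) hm.le
          have h2 : -(2*η x*(Gu x*c)) ≤ 2*(m*Z) := by
            have hneg : -(Gu x * c) ≤ m*Z := by
              have := neg_le_abs (Gu x * c); linarith [hGuc]
            calc -(2*η x*(Gu x*c)) = 2*η x*(-(Gu x*c)) := by ring
              _ ≤ 2*η x*(m*Z) :=
                  mul_le_mul_of_nonneg_left hneg (by linarith)
              _ ≤ 2*1*(m*Z) := by
                  have : (0:ℝ) ≤ m*Z := mul_nonneg hm.le hZ0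
                  nlinarith
              _ = 2*(m*Z) := by ring
          have h3 : -(η x^2*G'u x*Z^2) ≤ m*Z^2 := by
            have e : -(G'u x) ≤ m := by
              have : -m ≤ G'u x := e4a
              linarith
            have hη2 : η x^2 ≤ 1 := by nlinarith
            calc -(η x^2*G'u x*Z^2) = (η x^2*Z^2)*(-(G'u x)) := by ring
              _ ≤ (η x^2*Z^2)*m := mul_le_mul_of_nonneg_left e (by positivity)
              _ ≤ m*Z^2 := by nlinarith [sq_nonneg Z, mul_nonneg (sq_nonneg Z) hm.le]
          have hq : m^2 ≤ 4*lam^2 := by nlinarith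
          have hy : 2*(m*Z) ≤ lam*Z^2 + 4*lam := by
            nlinarith [sq_nonneg (lam*Z - m), mul_pos hlam0 hlam0]
          have hmZ2 : m*Z^2 ≤ 2*lam*Z^2 := mul_le_mul_of_nonneg_right hm2l (sq_nonneg Z)
          have hfinal : -(Q1 x) ≤ 3*lam*Z^2 + 4*lam := by
            rw [hdecomp]; linarith
          have hxTS : x ∈ TS := ⟨hc, hx⟩
          rw [Set.indicator_of_mem hxTS, Set.indicator_of_mem hx]
          have hWnn : 0 ≤ W' (u x)^2 := sq_nonneg _
          rw [← hZdef]
          linarith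
        · -- region |u| ≥ 1-λ
          have hs1m : 1 - m ≤ (u x)^2 := by
            have h'' : (1-lam)^2 ≤ |u x|^2 := pow_le_pow_left₀ (by linarith) hc 2
            rw [sq_abs, h1m] at h''
            exact h''
          have e5a := L5a (m := m) (s := u x) hm hm' hs1m
          have e5b := L5b (m := m) (s := u x) hm
          set Y : ℝ := η x * Z with hYdef
          have hY0 : 0 ≤ Y := mul_nonneg hηa hZ0
          have hYsq : Y^2 = η x^2 * Z^2 := by rw [hYdef]; ring
          have t1 : -(η x^2*G'u x*Z^2) ≤ -(1/2)*Y^2 := by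
            have h5 : (η x^2*Z^2)*(1/2) ≤ (η x^2*Z^2)*G'u x :=
              mul_le_mul_of_nonneg_left e5a (by positivity)
            have h6 : η x^2*G'u x*Z^2 = (η x^2*Z^2)*G'u x := by ring
            rw [hYsq]
            linarith
          have t2 : -(2*η x*(Gu x*c)) ≤ 2 * |Gu x| * Y := by
            calc -(2*η x*(Gu x*c)) ≤ |2*η x*(Gu x*c)| := neg_le_abs _
              _ = 2*η x*(|Gu x| * |c|) := by
                  rw [abs_mul, abs_mul, abs_mul, abs_of_nonneg hηa,
                    abs_of_nonneg (by norm_num : (0:ℝ) ≤ 2)]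
              _ ≤ 2*η x*(|Gu x| * Z) := by
                  have h7 : |Gu x| * |c| ≤ |Gu x| * Z :=
                    mul_le_mul_of_nonneg_left hgg (abs_nonneg _)
                  have h8 : (0:ℝ) ≤ 2*η x := by linarith
                  exact mul_le_mul_of_nonneg_left h7 h8
              _ = 2 * |Gu x| * Y := by rw [hYdef]; ring
          have t3 : -(1/2)*Y^2 + 2 * |Gu x| * Y ≤ 2*(Gu x)^2 := by
            nlinarith [sq_nonneg (Y - 2*|Gu x|), sq_abs (Gu x)]
          have hfinal : -(Q1 x) ≤ 2*W' (u x)^2 := by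
            rw [hdecomp]
            nlinarith [sq_abs (Gu x)]
          rw [Set.indicator_of_mem hx]
          have hTSind : 0 ≤ TS.indicator (fun x => 3*lam*‖gradient u x‖^2) x :=
            Set.indicator_nonneg (fun y _ => by positivity) x
          linarith
      · have h0 : Q1 x = 0 := hQ1S x hx
        have hTSx : x ∉ TS := fun h => hx h.2
        rw [h0, Set.indicator_of_notMem hx, Set.indicator_of_notMem hTSx]
        simp
    have hTSint : IntegrableOn (fun x => 3*lam*‖gradient u x‖^2) TS :=
      ContinuousOn.integrableOn_compact hTScompact
        (continuous_const.mul ((hgradu.norm).pow 2)).continuousOn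
    have hSint2 : IntegrableOn (fun x => 4*lam + 2*W' (u x)^2) S :=
      ContinuousOn.integrableOn_compact hScompact
        (continuous_const.add (continuous_const.mul (hW'cont.pow 2))).continuousOn
    have hrhs_int : Integrable (fun x => TS.indicator (fun x => 3*lam*‖gradient u x‖^2) x
        + S.indicator (fun x => 4*lam + 2*W' (u x)^2) x) :=
      (hTSint.integrable_indicator hTSmeas).add (hSint2.integrable_indicator hSmeas)
    calc (∫ x, -(Q1 x))
        ≤ ∫ x, (TS.indicator (fun x => 3*lam*‖gradient u x‖^2) x
            + S.indicator (fun x => 4*lam + 2*W' (u x)^2) x) :=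
          integral_mono hQ1int.neg hrhs_int hptw
      _ = 3*lam*Dir + E2 := by
          rw [integral_add (hTSint.integrable_indicator hTSmeas)
            (hSint2.integrable_indicator hSmeas), integral_indicator hTSmeas,
            integral_indicator hSmeas, integral_const_mul, hDirdef, hE2def]
  -- combine
  have step1 : 1/(2*ε) * J ≤ ε/2 * Iν + ε * (3*lam*Dir + E2) := by
    have hneg : -(∫ x, Q1 x) ≤ 3*lam*Dir + E2 := by
      rw [← integral_neg]; exact bd2
    have h5 : ε * (-(∫ x, Q1 x)) ≤ ε * (3*lam*Dir + E2) :=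
      mul_le_mul_of_nonneg_left hneg hε0.le
    have halg : 1/(2*ε) * J = (1/ε)*J - 1/(2*ε)*J := by
      field_simp
      ring
    nlinarith [ibp2, bd1, h5]
  have hJle : J ≤ ε^2 * Iν + ε^2*(6*lam*Dir + 2*E2) := by
    have h2ε : (0:ℝ) < 2*ε := by linarith
    have hL : 2*ε*(1/(2*ε)*J) = J := by field_simp
    calc J = 2*ε*(1/(2*ε)*J) := hL.symm
      _ ≤ 2*ε*(ε/2 * Iν + ε * (3*lam*Dir + E2)) :=
          mul_le_mul_of_nonneg_left step1 h2ε.le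
      _ = ε^2 * Iν + ε^2*(6*lam*Dir + 2*E2) := by ring
  -- bound the goal's LHS by (2/5)(1/ε)J
  have hε' : (0:ℝ) ≤ 1/ε := by positivity
  have hLHS : (∫ x in {x | 1 - lam ≤ |u x|}, (1 / ε) * W (u x) * η x ^ 2)
      ≤ (2/5)*((1/ε) * J) := by
    have hA'meas : MeasurableSet {x | 1 - lam ≤ |u x|} :=
      (isClosed_le continuous_const hucont.abs).measurableSet
    have hf1int : Integrable (fun x => (1/ε) * W (u x) * η x ^ 2) :=
      mk_int _ ((continuous_const.mul hWcont).mul (hηcont.pow 2))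
        (fun x hx => by rw [hηS x hx]; ring)
    have hf2int : Integrable (fun x => (2/5)*((1/ε) * WG x)) :=
      (hWGint.const_mul (1/ε)).const_mul (2/5)
    calc (∫ x in {x | 1 - lam ≤ |u x|}, (1 / ε) * W (u x) * η x ^ 2)
        ≤ ∫ x in {x | 1 - lam ≤ |u x|}, (2/5)*((1/ε) * WG x) := by
          refine setIntegral_mono_on hf1int.integrableOn hf2int.integrableOn hA'meas ?_
          intro x hx
          have hx' : 1 - lam ≤ |u x| := hx
          have hs1m : 1 - m ≤ (u x)^2 := by
            have h'' : (1-lam)^2 ≤ |u x|^2 := pow_le_pow_left₀ (by linarith) hx' 2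
            rw [sq_abs, h1m] at h''
            exact h''
          have e2 := L2 (m := m) (s := u x) hm hm' hs1m
          have h6 : W (u x) * η x^2 ≤ 2/5*(W' (u x)*Gu x)*η x^2 := by
            have := mul_le_mul_of_nonneg_right e2 (sq_nonneg (η x))
            calc W (u x) * η x^2 ≤ (2/5*(W' (u x) * gfun m (u x)))*η x^2 := this
              _ = 2/5*(W' (u x)*Gu x)*η x^2 := by rw [hGudef]
          calc (1 / ε) * W (u x) * η x ^ 2 = (1/ε)*(W (u x)*η x^2) := by ring
            _ ≤ (1/ε)*(2/5*(W' (u x)*Gu x)*η x^2) := mul_le_mul_of_nonneg_left h6 hε'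
            _ = (2/5)*((1/ε) * WG x) := by rw [hWGdef]; ring
      _ ≤ (2/5)*((1/ε) * J) := by
          have h7 : (∫ x in {x | 1 - lam ≤ |u x|}, (2/5)*((1/ε) * WG x))
              = (2/5)*((1/ε)*(∫ x in {x | 1 - lam ≤ |u x|}, WG x)) := by
            rw [integral_const_mul, integral_const_mul]
          rw [h7]
          have h8 : (∫ x in {x | 1 - lam ≤ |u x|}, WG x) ≤ J := by
            rw [hJdef]
            exact setIntegral_le_integral hWGint
              (Filter.Eventually.of_forall fun x => hWGnn x)
          exact mul_le_mul_of_nonneg_left (mul_le_mul_of_nonneg_left h8 hε')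
            (by norm_num)
  -- final assembly
  have hIν0 : 0 ≤ Iν := setIntegral_nonneg hSmeas (fun x _ => sq_nonneg _)
  have hDir0 : 0 ≤ Dir := setIntegral_nonneg hTSmeas (fun x _ => by positivity)
  have hgoal1 : (∫ x in TS, ε * ‖gradient u x‖ ^ 2) = ε * Dir := by
    rw [hDirdef, integral_const_mul]
  have hE2int2 : IntegrableOn (fun x => 4*lam + 2*W' (u x)^2) S :=
    ContinuousOn.integrableOn_compact hScompact
      (continuous_const.add (continuous_const.mul (hW'cont.pow 2))).continuousOn
  have hbig : (2/5)*ε*Iν + (4/5)*ε*E2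
      ≤ 4*ε*(∫ x in S, (nu x^2 + W' (u x)^2 + 1)) := by
    have hIWint : IntegrableOn (fun x => nu x^2 + W' (u x)^2 + 1) S :=
      ContinuousOn.integrableOn_compact hScompact
        (((hnucont.pow 2).add (hW'cont.pow 2)).add continuous_const).continuousOn
    have hcomb : (2/5)*Iν + (4/5)*E2
        = ∫ x in S, ((2/5)*nu x^2 + (4/5)*(4*lam + 2*W' (u x)^2)) := by
      rw [integral_add (hIνint.const_mul (2/5)) (hE2int2.const_mul (4/5)),
        integral_const_mul, integral_const_mul, hIνdef, hE2def]
    have hmono : (∫ x in S, ((2/5)*nu x^2 + (4/5)*(4*lam + 2*W' (u x)^2)))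
        ≤ ∫ x in S, 4*(nu x^2 + W' (u x)^2 + 1) := by
      refine setIntegral_mono_on ((hIνint.const_mul (2/5)).add (hE2int2.const_mul (4/5)))
        (hIWint.const_mul 4) hSmeas ?_
      intro x _
      nlinarith [sq_nonneg (nu x), sq_nonneg (W' (u x))]
    have h4 : (∫ x in S, 4*(nu x^2 + W' (u x)^2 + 1))
        = 4*(∫ x in S, (nu x^2 + W' (u x)^2 + 1)) := integral_const_mul _ _
    have := le_trans (le_of_eq hcomb) (le_trans hmono (le_of_eq h4))
    nlinarith [this, hε0]
  have hIW0 : 0 ≤ (∫ x in S, (nu x^2 + W' (u x)^2 + 1)) :=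
    setIntegral_nonneg hSmeas (fun x _ => by positivity)
  have hnu_eq : (fun x => nu x^2 + W' (u x)^2 + 1)
      = fun x => ((-(ε * lap u x) + (1 / ε) * W' (u x)) ^ 2 + W' (u x) ^ 2 + 1) := by
    funext x
    rw [hnudef]
  calc (∫ x in {x | 1 - lam ≤ |u x|}, (1 / ε) * W (u x) * η x ^ 2)
      ≤ (2/5)*((1/ε) * J) := hLHS
    _ ≤ (2/5)*((1/ε) * (ε^2 * Iν + ε^2*(6*lam*Dir + 2*E2))) := by
        refine mul_le_mul_of_nonneg_left (mul_le_mul_of_nonneg_left hJle hε') (by norm_num)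
    _ = (2/5)*ε*Iν + (12/5)*lam*(ε*Dir) + (4/5)*ε*E2 := by
        field_simp
        ring
    _ ≤ 15 * lam * (ε*Dir) + 4*ε*(∫ x in S, (nu x^2 + W' (u x)^2 + 1)) := by
        have h9 : (12/5)*(lam*(ε*Dir)) ≤ 15*(lam*(ε*Dir)) := by
          have : 0 ≤ lam*(ε*Dir) := mul_nonneg hlam0.le (mul_nonneg hε0.le hDir0)
          linarith
        nlinarith [hbig]
    _ = 15 * lam * (∫ x in TS, ε * ‖gradient u x‖ ^ 2)
        + 4 * ε * ∫ x in S, ((-(ε * lap u x) + (1 / ε) * W' (u x)) ^ 2 + W' (u x) ^ 2 + 1) := by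
        rw [hgoal1, ← hnu_eq]
end
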